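/- The Polish group ∏_{n∈ℕ} ℤ (countable product of copies of ℤ with the product topology) cannot be covered by countably many coarsely bounded subsets. -/
import Mathlib


/-- A subset `B` of a topological additive group is coarsely bounded if it has finite
diameter with respect to every continuous left-invariant pseudometric. -/
def AddCoarselyBounded {G : Type*} [AddGroup G] [TopologicalSpace G] (B : Set G) : Prop :=
  ∀ d : G → G → ℝ,
    Continuous (fun p : G × G => d p.1 p.2) →
    (∀ k g h : G, d (k + g) (k + h) = d g h) →
    (∀ g : G, d g g = 0) →
    (∀ g h : G, d g h = d h g) →
    (∀ g h k : G, d g k ≤ d g h + d h k) →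
    ∃ C : ℝ, ∀ g ∈ B, ∀ h ∈ B, d g h ≤ C

theorem prodZ_not_sigma_bounded :
    ¬ ∃ B : ℕ → Set (ℕ → ℤ),
      (∀ n, AddCoarselyBounded (B n)) ∧ (⋃ n, B n) = Set.univ := by
  classical
  rintro ⟨B, hB, hU⟩
  -- For each n, the pseudometric d(g,h) = |g n - h n| gives a bound on coordinate n.
  have key : ∀ n, ∃ C : ℝ, ∀ g ∈ B n, ∀ h ∈ B n, |((g n : ℝ)) - h n| ≤ C := by
    intro n
    refine hB n (fun g h => |((g n : ℝ)) - h n|) ?_ ?_ ?_ ?_ ?_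
    · exact (((continuous_of_discreteTopology (f := (Int.cast : ℤ → ℝ))).comp ((continuous_apply n).comp continuous_fst)).sub
        ((continuous_of_discreteTopology (f := (Int.cast : ℤ → ℝ))).comp ((continuous_apply n).comp continuous_snd))).abs
    · intro k g h; simp only [Pi.add_apply]; push_cast; ring_nf
    · intro g; simp
    · intro g h; exact abs_sub_comm _ _
    · intro g h k
      have := abs_sub_abs_le_abs_sub ((g n : ℝ) - h n) 0
      calc |((g n : ℝ)) - k n| = |(((g n : ℝ)) - h n) + (((h n : ℝ)) - k n)| := by ring_nf
        _ ≤ _ := abs_add_le _ _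
  choose C hC using key
  -- diagonal element
  set f : ℕ → ℤ := fun n =>
    if hn : (B n).Nonempty then hn.some n + (⌈C n⌉₊ + 1) else 0 with hf
  have hfmem : f ∈ ⋃ n, B n := hU ▸ Set.mem_univ f
  obtain ⟨n, hn⟩ := Set.mem_iUnion.mp hfmem
  have hne : (B n).Nonempty := ⟨f, hn⟩
  have hfn : f n = hne.some n + (⌈C n⌉₊ + 1) := by
    simp only [hf, dif_pos hne]
  have hbound := hC n f hn hne.some hne.some_mem
  rw [hfn] at hbound
  push_cast at hbound
  rw [add_sub_cancel_left, abs_of_nonneg (by positivity)] at hbound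
  have hceil : C n ≤ (⌈C n⌉₊ : ℝ) := Nat.le_ceil _
  linarith
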